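/- Let A be an artin algebra with Jacobson radical J and M a finitely generated semilocal A-module (a finite direct sum of modules with simple top) of Loewy length m. For each indecomposable direct summand X of ⊕_{i=1}^m M/MJ^i of Loewy length m, the canonical surjection ρ : X → X/XJ^{m-1} induces an isomorphism Hom_A(X/XJ^{m-1}, N) ≅ Rad_{mod A}(X, N) for every N ∈ add(⊕_{i=1}^m M/MJ^i). (This is Lemma 2.4 of the paper.) -/

import Mathlib

/-- The Jacobson radical of a ring `A`. -/
def jacobsonRad (A : Type) [Ring A] : Ideal A := Ideal.jacobson ⊥

/-- The submodule `I • N` (span of products), valid over noncommutative rings. -/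
def smulSub {A : Type} [Ring A] (I : Ideal A) {M : Type} [AddCommGroup M] [Module A M]
    (N : Submodule A M) : Submodule A M :=
  Submodule.span A {x | ∃ a ∈ I, ∃ y ∈ N, x = a • y}

/-- `radPow A M n` is the submodule `M J(A)^n` (written for left modules: `J(A)^n M`). -/
def radPow (A : Type) [Ring A] (M : Type) [AddCommGroup M] [Module A M] : ℕ → Submodule A M
  | 0 => ⊤
  | n + 1 => smulSub (jacobsonRad A) (radPow A M n)

lemma radPow_succ_le (A : Type) [Ring A] (M : Type) [AddCommGroup M] [Module A M] (n : ℕ) :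
    radPow A M (n + 1) ≤ radPow A M n := by
  show smulSub (jacobsonRad A) (radPow A M n) ≤ radPow A M n
  rw [smulSub, Submodule.span_le]
  rintro x ⟨a, _, y, hy, rfl⟩
  exact Submodule.smul_mem _ a hy

lemma radPow_le_one (A : Type) [Ring A] (M : Type) [AddCommGroup M] [Module A M]
    {j : ℕ} (hj : 1 ≤ j) : radPow A M j ≤ radPow A M 1 := by
  induction j with
  | zero => omega
  | succ n ih =>
    rcases Nat.lt_or_ge 1 (n+1) with h | h
    · exact le_trans (radPow_succ_le A M n) (ih (by omega))
    · have : n + 1 = 1 := by omega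
      rw [this]

/-- `X` belongs to `add M`: it is a direct summand of a finite direct sum of copies of `M`. -/
def InAdd (A : Type) [Ring A] (M : Type) [AddCommGroup M] [Module A M]
    (X : Type) [AddCommGroup X] [Module A X] : Prop :=
  ∃ (n : ℕ) (Y : Type) (_ : AddCommGroup Y) (_ : Module A Y),
    Nonempty ((X × Y) ≃ₗ[A] (Fin n → M))

/-- `f` lies in the Jacobson radical of the category of `A`-modules. -/
def IsRadMor (A : Type) [Ring A] {M N : Type} [AddCommGroup M] [Module A M]
    [AddCommGroup N] [Module A N] (f : M →ₗ[A] N) : Prop :=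
  ∀ g : N →ₗ[A] M, IsUnit ((1 : Module.End A M) - (g ∘ₗ f : Module.End A M))

/-- The ADR module `⊕_{j=1}^m A/J^j`. -/
abbrev ADRModule (A : Type) [Ring A] (m : ℕ) : Type :=
  ∀ j : Fin m, A ⧸ radPow A A (j.1 + 1)

/-- The module `⊕_{i=1}^m M/MJ^i` whose endomorphism ring is the ADR algebra of `M`. -/
abbrev ADRModuleOf (A : Type) [Ring A] (M : Type) [AddCommGroup M] [Module A M] (m : ℕ) :
    Type := ∀ i : Fin m, M ⧸ radPow A M (i.1 + 1)

/-- `X` is an indecomposable module. -/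
def Indecomp (A : Type) [Ring A] (X : Type) [AddCommGroup X] [Module A X] : Prop :=
  Nontrivial X ∧ ∀ e : Module.End A X, e * e = e → e = 0 ∨ e = 1

section Helpers

open Submodule LinearMap

variable {A : Type} [Ring A]

lemma smulSub_mono {M : Type} [AddCommGroup M] [Module A M] (I : Ideal A)
    {U V : Submodule A M} (h : U ≤ V) : smulSub I U ≤ smulSub I V := by
  apply Submodule.span_mono
  rintro x ⟨a, ha, y, hy, rfl⟩
  exact ⟨a, ha, y, h hy, rfl⟩

lemma smulSub_le {M : Type} [AddCommGroup M] [Module A M] (I : Ideal A)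
    (U : Submodule A M) : smulSub I U ≤ U := by
  rw [smulSub, Submodule.span_le]
  rintro x ⟨a, _, y, hy, rfl⟩
  exact Submodule.smul_mem _ a hy

lemma smulSub_sup {M : Type} [AddCommGroup M] [Module A M] (I : Ideal A)
    (U V : Submodule A M) : smulSub I (U ⊔ V) ≤ smulSub I U ⊔ smulSub I V := by
  rw [smulSub, Submodule.span_le]
  rintro x ⟨a, ha, y, hy, rfl⟩
  obtain ⟨u, hu, v, hv, rfl⟩ := Submodule.mem_sup.mp hy
  rw [smul_add]
  exact Submodule.add_mem_sup (Submodule.subset_span ⟨a, ha, u, hu, rfl⟩)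
    (Submodule.subset_span ⟨a, ha, v, hv, rfl⟩)

lemma map_smulSub {M N : Type} [AddCommGroup M] [Module A M] [AddCommGroup N] [Module A N]
    (f : M →ₗ[A] N) (I : Ideal A) (U : Submodule A M) :
    Submodule.map f (smulSub I U) = smulSub I (Submodule.map f U) := by
  rw [smulSub, smulSub, Submodule.map_span]
  congr 1
  ext x
  constructor
  · rintro ⟨y, ⟨a, ha, z, hz, rfl⟩, rfl⟩
    exact ⟨a, ha, f z, ⟨z, hz, rfl⟩, map_smul f a z⟩
  · rintro ⟨a, ha, y, ⟨z, hz, rfl⟩, rfl⟩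
    exact ⟨a • z, ⟨a, ha, z, hz, rfl⟩, map_smul f a z⟩

lemma radPow_map_le_offset {M N : Type} [AddCommGroup M] [Module A M] [AddCommGroup N]
    [Module A N] (f : M →ₗ[A] N) (k : ℕ) (hk : LinearMap.range f ≤ radPow A N k) (n : ℕ) :
    Submodule.map f (radPow A M n) ≤ radPow A N (n + k) := by
  induction n with
  | zero =>
    rw [show radPow A M 0 = ⊤ from rfl, Submodule.map_top]
    simpa using hk
  | succ n ih =>
    show Submodule.map f (smulSub _ _) ≤ radPow A N (n + 1 + k)
    rw [map_smulSub]
    have h1 : n + 1 + k = (n + k) + 1 := by omega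
    rw [h1]
    exact le_trans (smulSub_mono _ ih) (le_refl (radPow A N ((n+k)+1)))

lemma radPow_map_le {M N : Type} [AddCommGroup M] [Module A M] [AddCommGroup N]
    [Module A N] (f : M →ₗ[A] N) (n : ℕ) :
    Submodule.map f (radPow A M n) ≤ radPow A N n := by
  simpa using radPow_map_le_offset f 0 le_top n

lemma radPow_map_eq {M N : Type} [AddCommGroup M] [Module A M] [AddCommGroup N]
    [Module A N] (f : M →ₗ[A] N) (hf : Function.Surjective f) (n : ℕ) :
    Submodule.map f (radPow A M n) = radPow A N n := by
  induction n with
  | zero =>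
    show Submodule.map f ⊤ = ⊤
    rw [Submodule.map_top, LinearMap.range_eq_top.mpr hf]
  | succ n ih =>
    show Submodule.map f (smulSub _ _) = smulSub _ _
    rw [map_smulSub, ih]

lemma radPow_eq_bot_of_injective {M N : Type} [AddCommGroup M] [Module A M] [AddCommGroup N]
    [Module A N] (f : M →ₗ[A] N) (hf : Function.Injective f) {n : ℕ}
    (h : radPow A N n = ⊥) : radPow A M n = ⊥ := by
  rw [eq_bot_iff]
  intro x hx
  have h2 : f x ∈ radPow A N n := radPow_map_le f n (Submodule.mem_map_of_mem hx)
  rw [h, Submodule.mem_bot] at h2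
  have : f x = f 0 := by rw [h2, map_zero]
  rw [Submodule.mem_bot]
  exact hf this

lemma radPow_pi {ι : Type} [Fintype ι] [DecidableEq ι] (F : ι → Type)
    [∀ i, AddCommGroup (F i)] [∀ i, Module A (F i)] (n : ℕ) :
    radPow A (∀ i, F i) n = Submodule.pi Set.univ (fun i => radPow A (F i) n) := by
  apply le_antisymm
  · intro x hx
    rw [Submodule.mem_pi]
    intro i _
    exact radPow_map_le (LinearMap.proj i) n (Submodule.mem_map_of_mem hx)
  · intro x hx
    rw [Submodule.mem_pi] at hx
    have hx2 : x = ∑ i, Pi.single i (x i) := (Finset.univ_sum_single x).symm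
    rw [hx2]
    refine Submodule.sum_mem _ fun i _ => ?_
    have h3 : Pi.single i (x i) = LinearMap.single A F i (x i) := rfl
    rw [h3]
    exact radPow_map_le (LinearMap.single A F i) n
      (Submodule.mem_map_of_mem (hx i (Set.mem_univ i)))

lemma sup_radPow {C : Type} [AddCommGroup C] [Module A C] (U : Submodule A C)
    (h : U ⊔ radPow A C 1 = ⊤) : ∀ k, U ⊔ radPow A C k = ⊤ := by
  intro k
  induction k with
  | zero => show U ⊔ ⊤ = ⊤; exact sup_top_eq U
  | succ k ih =>
    have h1 : radPow A C 1 ≤ U ⊔ radPow A C (k + 1) := by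
      have e0 : radPow A C 0 = U ⊔ radPow A C k := by rw [ih]; rfl
      calc radPow A C 1 = smulSub (jacobsonRad A) (U ⊔ radPow A C k) := by
            show smulSub (jacobsonRad A) (radPow A C 0) = _; rw [e0]
        _ ≤ smulSub (jacobsonRad A) U ⊔ smulSub (jacobsonRad A) (radPow A C k) :=
            smulSub_sup _ _ _
        _ ≤ U ⊔ radPow A C (k + 1) := sup_le_sup (smulSub_le _ _) (le_refl _)
    rw [eq_top_iff]
    calc (⊤ : Submodule A C) = U ⊔ radPow A C 1 := h.symm
      _ ≤ U ⊔ (U ⊔ radPow A C (k + 1)) := sup_le_sup_left h1 U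
      _ = U ⊔ radPow A C (k + 1) := by rw [← sup_assoc, sup_idem]

lemma isRadMor_comp {X N N' : Type} [AddCommGroup X] [Module A X] [AddCommGroup N] [Module A N]
    [AddCommGroup N'] [Module A N'] {f : X →ₗ[A] N} (hf : IsRadMor A f) (h : N →ₗ[A] N') :
    IsRadMor A (h ∘ₗ f) := by
  intro g
  have h2 := hf (g ∘ₗ h)
  have h3 : (g ∘ₗ h) ∘ₗ f = g ∘ₗ (h ∘ₗ f) := LinearMap.comp_assoc f h g
  rwa [h3] at h2

lemma isUnit_one_sub_of_not_injective {X : Type} [AddCommGroup X] [Module A X]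
    [IsNoetherian A X] [IsArtinian A X] (hXind : Indecomp A X)
    (v : Module.End A X) (hv : ¬ Function.Injective v) : IsUnit (1 - v) := by
  obtain ⟨a, ha⟩ := Filter.eventually_atTop.mp (LinearMap.eventually_isCompl_ker_pow_range_pow v)
  have hcompl : IsCompl (LinearMap.ker (v ^ (a + 1))) (LinearMap.range (v ^ (a + 1))) :=
    ha (a + 1) (Nat.le_add_right a 1)
  set k := a + 1 with hkdef
  -- a nonzero element of the kernel
  have hker : ∃ x : X, x ≠ 0 ∧ (v ^ k) x = 0 := by
    obtain ⟨x, y, hxy, hne⟩ := Function.not_injective_iff.mp hv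
    refine ⟨x - y, sub_ne_zero.mpr hne, ?_⟩
    have hz : v (x - y) = 0 := by rw [map_sub, hxy, sub_self]
    rw [hkdef, pow_succ, Module.End.mul_apply, hz, map_zero]
  let π := Submodule.projectionOnto _ _ hcompl.symm
  let e : Module.End A X := (LinearMap.range (v ^ k)).subtype ∘ₗ π
  have heapp : ∀ y : X, e y = ((π y : X)) := fun y => rfl
  have he : e * e = e := by
    apply LinearMap.ext
    intro y
    show e (e y) = e y
    rw [heapp y, heapp ((π y : X))]
    rw [Submodule.projectionOnto_apply_left hcompl.symm (π y)]
  rcases hXind.2 e he with h0 | h1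
  · -- v is nilpotent
    have hnil : IsNilpotent v := by
      refine ⟨k, ?_⟩
      apply LinearMap.ext
      intro y
      have hy : (v ^ k) y ∈ LinearMap.range (v ^ k) := LinearMap.mem_range_self _ y
      have h2 : e ((v ^ k) y) = (v ^ k) y := by
        rw [heapp]
        exact congrArg Subtype.val
          (Submodule.projectionOnto_apply_left hcompl.symm ⟨(v ^ k) y, hy⟩)
      rw [h0] at h2
      exact h2.symm
    exact hnil.isUnit_one_sub
  · -- contradiction with non-injectivity
    exfalso
    obtain ⟨x, hx0, hxk⟩ := hker
    have h2 : e x = 0 := by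
      rw [heapp]
      rw [Submodule.projectionOnto_apply_of_mem_right hcompl.symm
        (LinearMap.mem_ker.mpr hxk)]
      rfl
    rw [h1] at h2
    exact hx0 h2

lemma quotient_top_simple {L : Type} [AddCommGroup L] [Module A L]
    (hL : IsSimpleModule A (L ⧸ radPow A L 1)) {W : Submodule A L} (hW : W ≤ radPow A L 1) :
    IsSimpleModule A ((L ⧸ W) ⧸ radPow A (L ⧸ W) 1) := by
  haveI := hL
  have h1 : radPow A (L ⧸ W) 1 = Submodule.map W.mkQ (radPow A L 1) :=
    (radPow_map_eq W.mkQ (Submodule.mkQ_surjective W) 1).symm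
  rw [h1]
  exact IsSimpleModule.congr (Submodule.quotientQuotientEquivQuotient W (radPow A L 1) hW)


/-- Quotient of a finite product by a product of submodules, over a noncommutative ring. -/
noncomputable def quotientPiRing {ι : Type} [Fintype ι] [DecidableEq ι] (F : ι → Type)
    [∀ i, AddCommGroup (F i)] [∀ i, Module A (F i)] (p : ∀ i, Submodule A (F i)) :
    ((∀ i, F i) ⧸ Submodule.pi Set.univ p) ≃ₗ[A] ∀ i, F i ⧸ p i := by
  let Φ : (∀ i, F i) →ₗ[A] ∀ i, F i ⧸ p i :=
    LinearMap.pi (fun i => (p i).mkQ ∘ₗ LinearMap.proj i)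
  have hΦ : ∀ (w : ∀ i, F i) (i : ι), Φ w i = Submodule.Quotient.mk (w i) := fun w i => rfl
  have hker : Submodule.pi Set.univ p ≤ LinearMap.ker Φ := by
    intro x hx
    rw [Submodule.mem_pi] at hx
    rw [LinearMap.mem_ker]
    funext i
    rw [hΦ]
    exact (Submodule.Quotient.mk_eq_zero _).mpr (hx i (Set.mem_univ i))
  have hker2 : LinearMap.ker Φ ≤ Submodule.pi Set.univ p := by
    intro x hx
    rw [LinearMap.mem_ker] at hx
    rw [Submodule.mem_pi]
    intro i _
    have h2 : Φ x i = 0 := by rw [hx]; rfl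
    rw [hΦ] at h2
    exact (Submodule.Quotient.mk_eq_zero _).mp h2
  refine LinearEquiv.ofBijective (Submodule.liftQ _ Φ hker) ⟨?_, ?_⟩
  · rw [← LinearMap.ker_eq_bot]
    exact Submodule.ker_liftQ_eq_bot _ _ _ hker2
  · intro y
    have hy : ∀ i, ∃ w, Submodule.Quotient.mk w = y i :=
      fun i => Submodule.Quotient.mk_surjective (p i) (y i)
    choose w hw using hy
    refine ⟨Submodule.Quotient.mk w, ?_⟩
    rw [Submodule.liftQ_apply]
    funext i
    rw [hΦ]
    exact hw i

/-- Linear version of `Equiv.piSplitAt`. -/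
def piSplit {ι : Type} [DecidableEq ι] (F : ι → Type) [∀ i, AddCommGroup (F i)]
    [∀ i, Module A (F i)] (i : ι) :
    (∀ k, F k) ≃ₗ[A] F i × (∀ k : {k : ι // k ≠ i}, F k.1) :=
  { Equiv.piSplitAt i F with
    map_add' := fun _ _ => rfl
    map_smul' := fun _ _ => rfl }

/-- Linear associativity of products, stated plainly. -/
def prodAssocL {P Q R : Type} [AddCommGroup P] [Module A P] [AddCommGroup Q] [Module A Q]
    [AddCommGroup R] [Module A R] : ((P × Q) × R) ≃ₗ[A] P × (Q × R) where
  toFun x := (x.1.1, (x.1.2, x.2))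
  invFun x := ((x.1, x.2.1), x.2.2)
  map_add' _ _ := rfl
  map_smul' _ _ := rfl
  left_inv _ := rfl
  right_inv _ := rfl

end Helpers

/-- Lemma 2.4: let `M` be a semilocal module of Loewy length `m` and let `X`
be an indecomposable direct summand of `⊕_{i=1}^m M/MJ^i` of Loewy length `m` (belonging to
`F_{0,1}`: `X` admits no surjective radical map to a summand of Loewy length `m`). Then for
every `N ∈ add(⊕_{i=1}^m M/MJ^i)`, precomposition with the canonical surjection
`ρ : X → X/XJ^{m-1}` gives a bijection `Hom_A(X/XJ^{m-1}, N) ≅ Rad_{mod A}(X, N)`. -/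
theorem stmt13 (K : Type) [Field K] (A : Type) [Ring A] [Algebra K A] [FiniteDimensional K A]
    (n : ℕ) (L : Fin n → Type) [∀ i, AddCommGroup (L i)] [∀ i, Module A (L i)]
    (hLloc : ∀ i, IsSimpleModule A ((L i) ⧸ radPow A (L i) 1))
    (M : Type) [AddCommGroup M] [Module A M] [Module.Finite A M]
    (hMsemi : Nonempty (M ≃ₗ[A] ((i : Fin n) → L i)))
    (m : ℕ) (hm : 1 ≤ m) (hM1 : radPow A M m = ⊥) (hM2 : radPow A M (m - 1) ≠ ⊥)
    (X : Type) [AddCommGroup X] [Module A X]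
    (hXind : Indecomp A X) (hXadd : InAdd A (ADRModuleOf A M m) X)
    (hXll : radPow A X (m - 1) ≠ ⊥)
    (hXF01 : ∀ (N : Type) [AddCommGroup N] [Module A N], InAdd A (ADRModuleOf A M m) N →
      radPow A N (m - 1) ≠ ⊥ → ∀ f : X →ₗ[A] N, IsRadMor A f → ¬ Function.Surjective f) :
    ∀ (N : Type) [AddCommGroup N] [Module A N], InAdd A (ADRModuleOf A M m) N →
      (∀ g : (X ⧸ radPow A X (m - 1)) →ₗ[A] N,
        IsRadMor A (g ∘ₗ (radPow A X (m - 1)).mkQ)) ∧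
      (∀ f : X →ₗ[A] N, IsRadMor A f →
        ∃! g : (X ⧸ radPow A X (m - 1)) →ₗ[A] N,
          f = g ∘ₗ (radPow A X (m - 1)).mkQ)    := by
  classical
  obtain ⟨ε⟩ := hMsemi
  haveI : IsNoetherianRing A := isNoetherian_of_tower K inferInstance
  haveI : IsArtinianRing A := isArtinian_of_tower K inferInstance
  -- X is noetherian and artinian
  obtain ⟨rX, YX, _, _, ⟨eX⟩⟩ := hXadd
  let ιX : X →ₗ[A] (Fin rX → ADRModuleOf A M m) := eX.toLinearMap ∘ₗ LinearMap.inl A X YX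
  have hιX : Function.Injective ιX := by
    intro x y hxy
    have h2 : eX (x, 0) = eX (y, 0) := hxy
    have h3 := eX.injective h2
    exact congrArg Prod.fst h3
  haveI : IsNoetherian A X := isNoetherian_of_injective ιX hιX
  haveI : IsArtinian A X := isArtinian_of_injective ιX hιX
  -- each L j has Loewy length at most m
  have hLm : ∀ j : Fin n, radPow A (L j) m = ⊥ := by
    intro j
    refine radPow_eq_bot_of_injective (ε.symm.toLinearMap ∘ₗ LinearMap.single A L j) ?_ hM1
    intro x y hxy
    have h2 : ε.symm (Pi.single j x) = ε.symm (Pi.single j y) := hxy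
    exact Pi.single_injective j (ε.symm.injective h2)
  intro N _ _ hNadd
  constructor
  · -- Part 1 : composites with ρ are radical morphisms
    intro g g'
    apply isUnit_one_sub_of_not_injective hXind
    intro hinj
    obtain ⟨x, hxmem, hx0⟩ := (Submodule.ne_bot_iff _).mp hXll
    have h2 : (g' ∘ₗ (g ∘ₗ (radPow A X (m - 1)).mkQ)) x = 0 := by
      show g' (g ((radPow A X (m - 1)).mkQ x)) = 0
      have h3 : (radPow A X (m - 1)).mkQ x = 0 := by
        rw [Submodule.mkQ_apply]
        exact (Submodule.Quotient.mk_eq_zero _).mpr hxmem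
      rw [h3, map_zero, map_zero]
    apply hx0
    apply hinj
    rw [h2, map_zero]
  · -- Part 2 : radical morphisms factor uniquely through ρ
    intro f hf
    have hker : radPow A X (m - 1) ≤ LinearMap.ker f := by
      obtain ⟨rN, YN, _, _, ⟨eN⟩⟩ := hNadd
      let ι : N →ₗ[A] (Fin rN → ADRModuleOf A M m) := eN.toLinearMap ∘ₗ LinearMap.inl A N YN
      let π : (Fin rN → ADRModuleOf A M m) →ₗ[A] N :=
        LinearMap.fst A N YN ∘ₗ eN.symm.toLinearMap
      have hπι : ∀ y : N, π (ι y) = y := by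
        intro y
        show (eN.symm (eN (y, 0))).1 = y
        rw [eN.symm_apply_apply]
      intro x hx
      rw [LinearMap.mem_ker]
      have hz : ι (f x) = 0 := by
        have hcomp : ∀ (kk : Fin rN) (ii : Fin m), ι (f x) kk ii = 0 := by
          intro kk ii
          -- notation
          have hmapε : Submodule.map (ε : M →ₗ[A] ((j : Fin n) → L j))
              (radPow A M (ii.1 + 1)) = radPow A ((j : Fin n) → L j) (ii.1 + 1) :=
            radPow_map_eq ε.toLinearMap ε.surjective _
          let εQ : (M ⧸ radPow A M (ii.1 + 1)) ≃ₗ[A]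
              (((j : Fin n) → L j) ⧸ radPow A ((j : Fin n) → L j) (ii.1 + 1)) :=
            Submodule.Quotient.equiv _ _ ε hmapε
          let C : Fin n → Type := fun j => L j ⧸ radPow A (L j) (ii.1 + 1)
          let p : ∀ j : Fin n, (((j : Fin n) → L j) ⧸
              radPow A ((j : Fin n) → L j) (ii.1 + 1)) →ₗ[A] C j := fun j =>
            Submodule.mapQ _ _ (LinearMap.proj j)
              (Submodule.map_le_iff_le_comap.mp (radPow_map_le (LinearMap.proj (R := A) (φ := L) j) (ii.1 + 1)))
          let H : ∀ j : Fin n, N →ₗ[A] C j := fun j =>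
            p j ∘ₗ (εQ.toLinearMap ∘ₗ (LinearMap.proj ii ∘ₗ (LinearMap.proj kk ∘ₗ ι)))
          let gj : ∀ j : Fin n, X →ₗ[A] C j := fun j => H j ∘ₗ f
          -- each component map kills x
          have hgj : ∀ j : Fin n, (gj j) x = 0 := by
            intro j
            have hrad : IsRadMor A (gj j) := isRadMor_comp hf (H j)
            have hCm : radPow A (C j) m = ⊥ := by
              show radPow A (L j ⧸ radPow A (L j) (ii.1 + 1)) m = ⊥
              rw [← radPow_map_eq (Submodule.mkQ _) (Submodule.mkQ_surjective _) m, hLm j,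
                Submodule.map_bot]
            by_cases hc : radPow A (C j) (m - 1) = ⊥
            · have h4 : (gj j) x ∈ radPow A (C j) (m - 1) :=
                radPow_map_le (gj j) (m - 1) (Submodule.mem_map_of_mem hx)
              rw [hc, Submodule.mem_bot] at h4
              exact h4
            · -- C j is a summand of the ADR module
              have hCadd : InAdd A (ADRModuleOf A M m) (C j) := by
                refine ⟨1, ((∀ j' : {j' : Fin n // j' ≠ j}, C j'.1) ×
                  (∀ i' : {i' : Fin m // i' ≠ ii}, M ⧸ radPow A M (i'.1.1 + 1))),
                  inferInstance, inferInstance, ⟨?_⟩⟩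
                have E2 : (((j : Fin n) → L j) ⧸ radPow A ((j : Fin n) → L j) (ii.1 + 1))
                    ≃ₗ[A] ∀ j' : Fin n, C j' :=
                  LinearEquiv.trans
                    (Submodule.quotEquivOfEq (radPow A ((j : Fin n) → L j) (ii.1 + 1))
                      (Submodule.pi Set.univ (fun j : Fin n => radPow A (L j) (ii.1 + 1)))
                      (radPow_pi L (ii.1 + 1)))
                    (quotientPiRing L (fun j : Fin n => radPow A (L j) (ii.1 + 1)))
                have E3 : (M ⧸ radPow A M (ii.1 + 1)) ≃ₗ[A] ∀ j' : Fin n, C j' :=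
                  εQ.trans E2
                have E4 : ADRModuleOf A M m ≃ₗ[A] (M ⧸ radPow A M (ii.1 + 1)) ×
                    (∀ i' : {i' : Fin m // i' ≠ ii}, M ⧸ radPow A M (i'.1.1 + 1)) :=
                  piSplit (fun i' : Fin m => M ⧸ radPow A M (i'.1 + 1)) ii
                exact (prodAssocL.symm.trans
                  ((((piSplit C j).symm.trans E3.symm).prodCongr
                    (LinearEquiv.refl A _)).trans E4.symm)).trans
                  (LinearEquiv.funUnique (Fin 1) A (ADRModuleOf A M m)).symm
              have hnsurj := hXF01 (C j) hCadd hc (gj j) hrad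
              haveI hsimple : IsSimpleModule A ((C j) ⧸ radPow A (C j) 1) :=
                quotient_top_simple (hLloc j) (radPow_le_one A (L j) (by omega))
              have hcoatom : IsCoatom (radPow A (C j) 1) :=
                isSimpleModule_iff_isCoatom.mp hsimple
              have hrange : LinearMap.range (gj j) ≤ radPow A (C j) 1 := by
                by_contra hnr
                have hsup : radPow A (C j) 1 ⊔ LinearMap.range (gj j) = ⊤ :=
                  hcoatom.2 _ (lt_of_le_of_ne le_sup_left (fun h => hnr (h ▸ le_sup_right)))
                have h5 := sup_radPow (LinearMap.range (gj j)) (by rwa [sup_comm] at hsup) m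
                rw [hCm, sup_bot_eq] at h5
                exact hnsurj (LinearMap.range_eq_top.mp h5)
              have hmap : Submodule.map (gj j) (radPow A X (m - 1)) ≤
                  radPow A (C j) ((m - 1) + 1) :=
                radPow_map_le_offset (gj j) 1 hrange (m - 1)
              rw [Nat.sub_add_cancel hm, hCm] at hmap
              have h6 := hmap (Submodule.mem_map_of_mem hx)
              rwa [Submodule.mem_bot] at h6
          -- assemble : the element of the quotient of the product is zero
          have hq : ∀ j : Fin n, p j (εQ (ι (f x) kk ii)) = 0 := fun j => hgj j
          have hεQ : εQ (ι (f x) kk ii) = 0 := by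
            obtain ⟨w, hw⟩ := Submodule.mkQ_surjective _ (εQ (ι (f x) kk ii))
            rw [← hw, Submodule.mkQ_apply, Submodule.Quotient.mk_eq_zero, radPow_pi]
            refine Submodule.mem_pi.mpr fun j _ => ?_
            have h7 := hq j
            rw [← hw, Submodule.mkQ_apply, Submodule.mapQ_apply] at h7
            exact (Submodule.Quotient.mk_eq_zero _).mp h7
          have h8 : εQ (ι (f x) kk ii) = εQ 0 := by rw [hεQ, map_zero]
          exact εQ.injective h8
        funext kk ii
        exact hcomp kk ii
      calc f x = π (ι (f x)) := (hπι (f x)).symm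
        _ = π 0 := by rw [hz]
        _ = 0 := map_zero π
    refine ⟨(radPow A X (m - 1)).liftQ f hker, (Submodule.liftQ_mkQ _ _ _).symm, ?_⟩
    intro g hg
    refine LinearMap.ext fun z => ?_
    obtain ⟨x, rfl⟩ := Submodule.mkQ_surjective _ z
    rw [Submodule.mkQ_apply, Submodule.liftQ_apply, hg]
    rfl
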